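/- For every m ≥ 1, the element x_1 x_2 ⋯ x_m is nonzero in Q_m. -/

import Mathlib

open MvPolynomial Finset
open Fin.NatCast

noncomputable section

/-- The defining ideal of `Q_m`: generated by `x_1^2` and `x_i^2 - x_{i-1} x_i` for `2 ≤ i ≤ m`
(variables are 1-based; `X ((i-1 : ℕ) : Fin m)` is `x_i`). -/
def Qrel (m : ℕ) [NeZero m] : Ideal (MvPolynomial (Fin m) (ZMod 2)) :=
  Ideal.span ((fun i : ℕ =>
      X ((i - 1 : ℕ) : Fin m) ^ 2 -
        (if i = 1 then 0 else X ((i - 2 : ℕ) : Fin m) * X ((i - 1 : ℕ) : Fin m))) ''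
    Set.Icc 1 m)

/-- The ring `Q_m`. -/
abbrev Qring (m : ℕ) [NeZero m] : Type :=
  MvPolynomial (Fin m) (ZMod 2) ⧸ Qrel m

/-- The image of `x_i` (1-based, for `1 ≤ i ≤ m`) in `Q_m`. -/
def xQ (m : ℕ) [NeZero m] (i : ℕ) : Qring m :=
  Ideal.Quotient.mk (Qrel m) (X ((i - 1 : ℕ) : Fin m))

namespace Statement10Aux

open scoped Classical

variable {m : ℕ}

/-- prefix sum of an exponent vector up to index `k`. -/
def S (k : Fin m) (e : Fin m →₀ ℕ) : ℕ := ∑ i ∈ Finset.Iic k, e i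

/-- "good" exponent vectors: total degree `m`, all prefix sums small. -/
def Pgood (m : ℕ) (e : Fin m →₀ ℕ) : Prop :=
  (∑ i, e i) = m ∧ ∀ k : Fin m, S k e ≤ (k : ℕ) + 1

lemma S_add (k : Fin m) (a b : Fin m →₀ ℕ) : S k (a + b) = S k a + S k b := by
  simp [S, Finset.sum_add_distrib]

lemma S_single (k j : Fin m) (c : ℕ) :
    S k (Finsupp.single j c) = if j ≤ k then c else 0 := by
  simp [S, Finsupp.single_apply, Finset.sum_ite_eq]

lemma S_mono {k k' : Fin m} (h : k ≤ k') (e : Fin m →₀ ℕ) : S k e ≤ S k' e :=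
  Finset.sum_le_sum_of_subset (Finset.Iic_subset_Iic.2 h)

lemma sum_single_univ (j : Fin m) (c : ℕ) : (∑ i, Finsupp.single j c i) = c := by
  simp [Finsupp.single_apply, Finset.sum_ite_eq]

lemma Pgood_iff (e : Fin m →₀ ℕ) (j' j : Fin m) (h : (j' : ℕ) + 1 = (j : ℕ)) :
    Pgood m (e + Finsupp.single j 2) ↔
      Pgood m (e + (Finsupp.single j' 1 + Finsupp.single j 1)) := by
  have hj' : j' ≤ j := by rw [Fin.le_def]; omega
  have hj'j : ¬ (j ≤ j') := by rw [Fin.le_def]; omega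
  constructor
  · rintro ⟨h1, h2⟩
    refine ⟨?_, fun k => ?_⟩
    · simp only [Finsupp.add_apply, Finset.sum_add_distrib, sum_single_univ] at h1 ⊢
      omega
    · have hk := h2 k
      have hjj := h2 j
      rw [S_add, S_single] at hk hjj
      rw [S_add, S_add, S_single, S_single]
      rw [if_pos le_rfl] at hjj
      by_cases hjk : j ≤ k
      · rw [if_pos hjk, if_pos (le_trans hj' hjk)]
        rw [if_pos hjk] at hk
        omega
      · rw [if_neg hjk]
        rw [if_neg hjk] at hk
        by_cases hj'k : j' ≤ k
        · rw [if_pos hj'k]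
          have hkj : k ≤ j := le_of_not_ge hjk
          have hmn := S_mono hkj e
          have hj'k2 : (j' : ℕ) ≤ (k : ℕ) := Fin.le_def.mp hj'k
          omega
        · rw [if_neg hj'k]; omega
  · rintro ⟨h1, h2⟩
    refine ⟨?_, fun k => ?_⟩
    · simp only [Finsupp.add_apply, Finset.sum_add_distrib, sum_single_univ] at h1 ⊢
      omega
    · have hk := h2 k
      rw [S_add, S_add, S_single, S_single] at hk
      rw [S_add, S_single]
      by_cases hjk : j ≤ k
      · rw [if_pos hjk]
        rw [if_pos hjk, if_pos (le_trans hj' hjk)] at hk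
        omega
      · rw [if_neg hjk]
        rw [if_neg hjk] at hk
        split_ifs at hk <;> omega


/-- The linear functional: sum of coefficients over good exponent vectors. -/
def lam (m : ℕ) (f : MvPolynomial (Fin m) (ZMod 2)) : ZMod 2 :=
  ∑ e ∈ f.support, if Pgood m e then MvPolynomial.coeff e f else 0

lemma lam_sum_subset {f : MvPolynomial (Fin m) (ZMod 2)} {s : Finset (Fin m →₀ ℕ)}
    (hs : f.support ⊆ s) :
    lam m f = ∑ e ∈ s, if Pgood m e then MvPolynomial.coeff e f else 0 :=
  Finset.sum_subset hs (fun e _ he => by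
    rw [MvPolynomial.notMem_support_iff.mp he, ite_self])

lemma lam_zero : lam m (0 : MvPolynomial (Fin m) (ZMod 2)) = 0 := by
  simp [lam]

lemma lam_add (f g : MvPolynomial (Fin m) (ZMod 2)) :
    lam m (f + g) = lam m f + lam m g := by
  rw [lam_sum_subset (s := f.support ∪ g.support) MvPolynomial.support_add,
    lam_sum_subset Finset.subset_union_left,
    lam_sum_subset Finset.subset_union_right, ← Finset.sum_add_distrib]
  refine Finset.sum_congr rfl fun e _ => ?_
  rw [MvPolynomial.coeff_add]
  split <;> simp

lemma lam_sub (f g : MvPolynomial (Fin m) (ZMod 2)) :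
    lam m (f - g) = lam m f - lam m g := by
  rw [eq_sub_iff_add_eq, ← lam_add, sub_add_cancel]

lemma lam_mul_monomial (a : Fin m →₀ ℕ) (f : MvPolynomial (Fin m) (ZMod 2)) :
    lam m (f * monomial a 1) =
      ∑ e ∈ f.support, if Pgood m (e + a) then MvPolynomial.coeff e f else 0 := by
  have emb : Function.Injective (fun e : Fin m →₀ ℕ => e + a) := add_left_injective a
  have hsub : (f * monomial a 1).support ⊆ f.support.map ⟨_, emb⟩ := by
    intro e he
    rw [MvPolynomial.mem_support_iff, MvPolynomial.coeff_mul_monomial'] at he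
    split_ifs at he with hle
    · rw [mul_one] at he
      exact Finset.mem_map.2 ⟨e - a, MvPolynomial.mem_support_iff.2 he,
        tsub_add_cancel_of_le hle⟩
    · exact absurd rfl he
  rw [lam_sum_subset hsub, Finset.sum_map]
  refine Finset.sum_congr rfl fun e he => ?_
  simp only [Function.Embedding.coeFn_mk]
  rw [MvPolynomial.coeff_mul_monomial, mul_one]


lemma lam_gen [NeZero m] (i : ℕ) (hi : i ∈ Set.Icc 1 m)
    (f : MvPolynomial (Fin m) (ZMod 2)) :
    lam m (f * (X ((i - 1 : ℕ) : Fin m) ^ 2 -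
      (if i = 1 then 0 else X ((i - 2 : ℕ) : Fin m) * X ((i - 1 : ℕ) : Fin m)))) = 0 := by
  obtain ⟨hi1, hi2⟩ := hi
  by_cases h1 : i = 1
  · subst h1
    rw [if_pos rfl, sub_zero, X_pow_eq_monomial, lam_mul_monomial]
    refine Finset.sum_eq_zero fun e he => ?_
    rw [if_neg]
    rintro ⟨-, h2⟩
    have h3 := h2 (((1 : ℕ) - 1 : ℕ) : Fin m)
    rw [S_add, S_single, if_pos le_rfl] at h3
    have hv : ((((1 : ℕ) - 1 : ℕ) : Fin m) : ℕ) = 0 := by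
      simp
    omega
  · have hii : 2 ≤ i := by omega
    set j : Fin m := ((i - 1 : ℕ) : Fin m) with hj
    set j' : Fin m := ((i - 2 : ℕ) : Fin m) with hj'
    have hvj : (j : ℕ) = i - 1 := Fin.val_cast_of_lt (by omega)
    have hvj' : (j' : ℕ) = i - 2 := Fin.val_cast_of_lt (by omega)
    have hval : (j' : ℕ) + 1 = (j : ℕ) := by omega
    have hXX : (X j' * X j : MvPolynomial (Fin m) (ZMod 2)) =
        monomial (Finsupp.single j' 1 + Finsupp.single j 1) 1 := by
      rw [X, X, monomial_mul, mul_one]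
    rw [if_neg h1, X_pow_eq_monomial, hXX, mul_sub, lam_sub,
      lam_mul_monomial, lam_mul_monomial, sub_eq_zero]
    refine Finset.sum_congr rfl fun e he => ?_
    exact if_congr (Pgood_iff e j' j hval) rfl rfl

lemma lam_mem [NeZero m] {p : MvPolynomial (Fin m) (ZMod 2)} (hp : p ∈ Qrel m)
    (f : MvPolynomial (Fin m) (ZMod 2)) : lam m (f * p) = 0 := by
  rw [Qrel] at hp
  induction hp using Submodule.span_induction generalizing f with
  | mem x hx =>
    obtain ⟨i, hi, rfl⟩ := hx
    exact lam_gen i hi f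
  | zero => rw [mul_zero, lam_zero]
  | add x y hx hy ihx ihy => rw [mul_add, lam_add, ihx, ihy, add_zero]
  | smul c x hx ih =>
    rw [smul_eq_mul, show f * (c * x) = f * c * x by ring, ih]

lemma prod_X_monomial (s : Finset (Fin m)) :
    (∏ j ∈ s, (X j : MvPolynomial (Fin m) (ZMod 2))) =
      monomial (∑ j ∈ s, Finsupp.single j 1) 1 := by
  induction s using Finset.induction with
  | empty => simp
  | @insert a s h ih =>
    rw [Finset.prod_insert h, ih, Finset.sum_insert h, X, monomial_mul, one_mul]

lemma lam_prod [NeZero m] :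
    lam m (∏ j : Fin m, (X j : MvPolynomial (Fin m) (ZMod 2))) = 1 := by
  have hE : ∀ i : Fin m, (∑ j : Fin m, Finsupp.single j 1) i = 1 := by
    intro i
    rw [Finsupp.finset_sum_apply]
    simp [Finsupp.single_apply, Finset.sum_ite_eq']
  rw [prod_X_monomial, lam, MvPolynomial.support_monomial, if_neg one_ne_zero,
    Finset.sum_singleton, MvPolynomial.coeff_monomial, if_pos rfl, if_pos]
  constructor
  · simp only [hE]
    simp
  · intro k
    rw [S]
    simp only [hE]
    rw [Finset.sum_const, smul_eq_mul, mul_one, Fin.card_Iic]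

end Statement10Aux

/-- For every `m ≥ 1`, `x_1 x_2 ⋯ x_m ≠ 0` in `Q_m`. -/
theorem statement10 (m : ℕ) [NeZero m] (hm : 1 ≤ m) :
    (∏ i ∈ Finset.Icc 1 m, xQ m i) ≠ 0 := by
  intro h0
  have hprod : (∏ i ∈ Finset.Icc 1 m, xQ m i) =
      Ideal.Quotient.mk (Qrel m) (∏ i ∈ Finset.Icc 1 m, X ((i - 1 : ℕ) : Fin m)) := by
    rw [map_prod]
    rfl
  rw [hprod, Ideal.Quotient.eq_zero_iff_mem] at h0
  have h1 := Statement10Aux.lam_mem h0 1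
  rw [one_mul] at h1
  have hre : (∏ i ∈ Finset.Icc 1 m, (X ((i - 1 : ℕ) : Fin m) :
      MvPolynomial (Fin m) (ZMod 2))) = ∏ j : Fin m, X j := by
    refine Finset.prod_bij' (fun i _ => ((i - 1 : ℕ) : Fin m))
      (fun j _ => (j : ℕ) + 1) (fun i hi => Finset.mem_univ _)
      (fun j _ => ?_) (fun i hi => ?_) (fun j _ => ?_) (fun i hi => rfl)
    · have := j.isLt
      simp only [Finset.mem_Icc]
      omega
    · rw [Finset.mem_Icc] at hi
      show ((((i - 1 : ℕ) : Fin m)) : ℕ) + 1 = i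
      have h2 : ((((i - 1 : ℕ) : Fin m)) : ℕ) = i - 1 := Fin.val_cast_of_lt (by omega)
      omega
    · show ((((j : ℕ) + 1 - 1 : ℕ)) : Fin m) = j
      simp [Fin.cast_val_eq_self]
  rw [hre, Statement10Aux.lam_prod] at h1
  exact one_ne_zero h1
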